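/- Let a ∈ ℝ², let d ∈ ℝ² be a unit vector, let φ ∈ (0, π/3], Δ ∈ (0, 1], and 0 < ε ≤ Δ. Then for every ε-granular state S ∈ A(ε), the pair {a, a + ε·d} is the unique two-element subset of S whose two points are at distance exactly ε; every other pair of distinct points of S is at distance at least 2ε. -/

import Mathlib

open Real Set

/-- Map an angle in `(-π, π]` (as returned by `Complex.arg`) to `[0, 2π)`. -/
noncomputable def toCCW (θ : ℝ) : ℝ := if 0 ≤ θ then θ else θ + 2 * Real.pi

/-- The counterclockwise angle from `w` to `z` (as vectors in `ℝ² = ℂ`), in `[0, 2π)`. -/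
noncomputable def ccwAngle (w z : ℂ) : ℝ := toCCW ((z / w).arg)

/-- The drawing hull `H(a, d, φ, Δ)`: all points within distance `Δ` of the anchor `a`
whose counterclockwise angle (measured from direction `d`) lies in `[0, φ)`,
together with the anchor itself. -/
noncomputable def dhull (a d : ℂ) (φ Δ : ℝ) : Set ℂ :=
  {a} ∪ {x : ℂ | dist x a ≤ Δ ∧ ccwAngle d (x - a) ∈ Set.Ico 0 φ}

/-- The `ε`-granular locations `L(ε)` of a drawing hull: the anchor together with the
nonnegative `2ε`-grid with origin `a + ε•d`, `x`-axis direction `d` (and `y`-axis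
direction `d` rotated counterclockwise by `π/2`, i.e. `I * d`), intersected with the hull. -/
noncomputable def dlocs (a d : ℂ) (φ Δ ε : ℝ) : Set ℂ :=
  ({a} ∪ {x : ℂ | ∃ i j : ℕ,
      x = a + ((1 + 2 * (i : ℝ)) * ε) • d + (2 * (j : ℝ) * ε) • (Complex.I * d)})
    ∩ dhull a d φ Δ

/-- The defining triples `T(ε)`: `{a, a + ε•d, a + (1+2i)ε•d}` for `i ≥ 1` with `(1+2i)ε ≤ Δ`. -/
noncomputable def dtriples (a d : ℂ) (Δ ε : ℝ) : Set (Set ℂ) :=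
  {T : Set ℂ | ∃ i : ℕ, 1 ≤ i ∧ (1 + 2 * (i : ℝ)) * ε ≤ Δ ∧
    T = {a, a + ε • d, a + ((1 + 2 * (i : ℝ)) * ε) • d}}

/-- The `ε`-granular states `A(ε) = {S ∪ T : S ⊆ L(ε), T ∈ T(ε)}`. -/
noncomputable def dstates (a d : ℂ) (φ Δ ε : ℝ) : Set (Set ℂ) :=
  {U : Set ℂ | ∃ S ⊆ dlocs a d φ Δ ε, ∃ T ∈ dtriples a d Δ ε, U = S ∪ T}

/-- The `ε`-granular states of size `ℓ`, `A^ℓ(ε)`. -/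
noncomputable def dstatesOfSize (a d : ℂ) (φ Δ ε : ℝ) (ℓ : ℕ) : Set (Set ℂ) :=
  {U ∈ dstates a d φ Δ ε | U.ncard = ℓ}

/-- For `0 < ε ≤ Δ` and any `ε`-granular state `S ∈ A(ε)`, the pair
`{a, a + ε•d}` is contained in `S`, its two points are at distance exactly `ε`, it is the
unique two-element subset of `S` at distance `ε`, and every other pair of distinct points
of `S` is at distance at least `2ε`. -/
lemma norm_pq (d : ℂ) (hd : ‖d‖ = 1) (p q : ℝ) :
    ‖p • d + q • (Complex.I * d)‖ = Real.sqrt (p ^ 2 + q ^ 2) := by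
  have h : p • d + q • (Complex.I * d) = ((p : ℂ) + (q : ℂ) * Complex.I) * d := by
    simp only [Complex.real_smul]; ring
  rw [h, norm_mul, hd, mul_one, Complex.norm_add_mul_I]

lemma dist_grid (a d : ℂ) (hd : ‖d‖ = 1) (p q p' q' : ℝ) :
    dist (a + p • d + q • (Complex.I * d)) (a + p' • d + q' • (Complex.I * d))
      = Real.sqrt ((p - p') ^ 2 + (q - q') ^ 2) := by
  rw [dist_eq_norm]
  rw [show (a + p • d + q • (Complex.I * d)) - (a + p' • d + q' • (Complex.I * d))
      = (p - p') • d + (q - q') • (Complex.I * d) by module]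
  exact norm_pq d hd _ _

theorem defining_pair_unique (a d : ℂ) (hd : ‖d‖ = 1) (φ Δ ε : ℝ)
    (hφ : φ ∈ Set.Ioc 0 (π / 3)) (hΔ : Δ ∈ Set.Ioc (0 : ℝ) 1)
    (hε : 0 < ε) (hεΔ : ε ≤ Δ) :
    ∀ S ∈ dstates a d φ Δ ε,
      ({a, a + ε • d} : Set ℂ) ⊆ S ∧
      dist a (a + ε • d) = ε ∧
      (∀ x ∈ S, ∀ y ∈ S, x ≠ y → dist x y = ε → ({x, y} : Set ℂ) = {a, a + ε • d}) ∧
      (∀ x ∈ S, ∀ y ∈ S, x ≠ y → ({x, y} : Set ℂ) ≠ {a, a + ε • d} → 2 * ε ≤ dist x y) := by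
  intro S hS
  obtain ⟨S', hS', T, ⟨i, hi1, hiΔ, rfl⟩, rfl⟩ := hS
  set g : ℕ → ℕ → ℂ := fun m n =>
    a + ((1 + 2 * (m : ℝ)) * ε) • d + (2 * (n : ℝ) * ε) • (Complex.I * d) with hg
  -- every point is the anchor or a grid point
  have hP : ∀ x ∈ S' ∪ {a, a + ε • d, a + ((1 + 2 * (i : ℝ)) * ε) • d},
      x = a ∨ ∃ m n : ℕ, x = g m n := by
    rintro x (hx | hx)
    · have := (hS' hx).1
      rcases this with h | ⟨m, n, h⟩
      · exact Or.inl h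
      · exact Or.inr ⟨m, n, h⟩
    · rcases hx with h | h | h
      · exact Or.inl h
      · refine Or.inr ⟨0, 0, ?_⟩
        simp [hg, h]
      · refine Or.inr ⟨i, 0, ?_⟩
        simp only [Set.mem_singleton_iff] at h
        simp [hg, h]
  have hg00 : g 0 0 = a + ε • d := by simp [hg]
  -- distance from anchor to grid point
  have hga : ∀ m n : ℕ, dist a (g m n)
      = Real.sqrt (((1 + 2 * (m : ℝ)) * ε) ^ 2 + (2 * (n : ℝ) * ε) ^ 2) := by
    intro m n
    have h := dist_grid a d hd 0 0 ((1 + 2 * (m : ℝ)) * ε) (2 * (n : ℝ) * ε)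
    simpa [hg, neg_sq] using h
  have hgg : ∀ m n m' n' : ℕ, dist (g m n) (g m' n')
      = Real.sqrt (((1 + 2 * (m : ℝ)) * ε - (1 + 2 * (m' : ℝ)) * ε) ^ 2
          + (2 * (n : ℝ) * ε - 2 * (n' : ℝ) * ε) ^ 2) := by
    intro m n m' n'
    exact dist_grid a d hd _ _ _ _
  -- anchor far from nontrivial grid points
  have haux1 : ∀ m n : ℕ, ¬(m = 0 ∧ n = 0) → 2 * ε ≤ dist a (g m n) := by
    intro m n h
    rw [hga]
    have h4 : (2 * ε) ^ 2 ≤ ((1 + 2 * (m : ℝ)) * ε) ^ 2 + (2 * (n : ℝ) * ε) ^ 2 := by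
      rcases Nat.eq_zero_or_pos m with hm | hm
      · have hn : 1 ≤ n := by
          rcases Nat.eq_zero_or_pos n with h0 | h0
          · exact absurd ⟨hm, h0⟩ h
          · exact h0
        have hn' : (1 : ℝ) ≤ (n : ℝ) := by exact_mod_cast hn
        have hm' : (m : ℝ) = 0 := by exact_mod_cast hm
        have h1 : 2 * ε ≤ 2 * (n : ℝ) * ε := by nlinarith
        have h2 : (2 * ε) ^ 2 ≤ (2 * (n : ℝ) * ε) ^ 2 :=
          pow_le_pow_left₀ (by positivity) h1 2
        nlinarith [h2, sq_nonneg ε]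
      · have hm' : (1 : ℝ) ≤ (m : ℝ) := by exact_mod_cast hm
        have h1 : 2 * ε ≤ (1 + 2 * (m : ℝ)) * ε := by nlinarith
        have h2 : (2 * ε) ^ 2 ≤ ((1 + 2 * (m : ℝ)) * ε) ^ 2 :=
          pow_le_pow_left₀ (by positivity) h1 2
        nlinarith [h2, sq_nonneg (2 * (n:ℝ) * ε)]
    calc 2 * ε = Real.sqrt ((2 * ε) ^ 2) := (Real.sqrt_sq (by positivity)).symm
      _ ≤ _ := Real.sqrt_le_sqrt h4
  -- dist a (g m n) = ε forces (m,n) = (0,0)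
  have haux2 : ∀ m n : ℕ, dist a (g m n) = ε → m = 0 ∧ n = 0 := by
    intro m n h
    rw [hga] at h
    have hsq : ((1 + 2 * (m : ℝ)) * ε) ^ 2 + (2 * (n : ℝ) * ε) ^ 2 = ε ^ 2 := by
      have := congrArg (· ^ 2) h
      simpa [Real.sq_sqrt (by positivity : (0:ℝ) ≤ ((1 + 2 * (m : ℝ)) * ε) ^ 2 + (2 * (n : ℝ) * ε) ^ 2)] using this
    have hm0 : (m : ℝ) = 0 := by
      nlinarith [Nat.cast_nonneg (α := ℝ) m, Nat.cast_nonneg (α := ℝ) n, sq_nonneg ε,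
        mul_pos hε hε, sq_nonneg ((n:ℝ) * ε), sq_nonneg ((m:ℝ) * ε), sq_nonneg (m:ℝ)]
    have hn0 : (n : ℝ) = 0 := by
      have hn2 : (n : ℝ) ^ 2 * ε ^ 2 ≤ 0 := by
        nlinarith [mul_nonneg (Nat.cast_nonneg (α := ℝ) m) (sq_nonneg ε),
          sq_nonneg ((m:ℝ) * ε)]
      have hn3 : (n : ℝ) ^ 2 * ε ^ 2 = 0 := le_antisymm hn2 (by positivity)
      have hn4 : (n : ℝ) ^ 2 = 0 := by
        rcases mul_eq_zero.mp hn3 with h' | h'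
        · exact h'
        · exact absurd h' (by positivity)
      exact sq_eq_zero_iff.mp hn4
    exact ⟨by exact_mod_cast hm0, by exact_mod_cast hn0⟩
  -- distinct grid points are at distance ≥ 2ε
  have haux3 : ∀ m n m' n' : ℕ, g m n ≠ g m' n' → 2 * ε ≤ dist (g m n) (g m' n') := by
    intro m n m' n' hne
    have hmn : m ≠ m' ∨ n ≠ n' := by
      by_contra h
      push_neg at h
      exact hne (by rw [h.1, h.2])
    rw [hgg]
    have hsq1 : ∀ k k' : ℕ, k ≠ k' → (1 : ℝ) ≤ ((k : ℝ) - (k' : ℝ)) ^ 2 := by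
      intro k k' hkk
      have h1 : (1 : ℤ) ≤ |(k : ℤ) - (k' : ℤ)| :=
        Int.one_le_abs (sub_ne_zero.mpr (by exact_mod_cast hkk))
      have h2 : (1 : ℤ) ≤ ((k : ℤ) - (k' : ℤ)) ^ 2 := by nlinarith [sq_abs ((k:ℤ) - k')]
      exact_mod_cast h2
    have h4 : (2 * ε) ^ 2 ≤ ((1 + 2 * (m : ℝ)) * ε - (1 + 2 * (m' : ℝ)) * ε) ^ 2
        + (2 * (n : ℝ) * ε - 2 * (n' : ℝ) * ε) ^ 2 := by
      rcases hmn with hmm | hnn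
      · have := hsq1 m m' hmm
        nlinarith [sq_nonneg (2 * (n:ℝ) * ε - 2 * (n':ℝ) * ε), sq_nonneg ε, hε.le]
      · have := hsq1 n n' hnn
        nlinarith [sq_nonneg ((1 + 2 * (m:ℝ)) * ε - (1 + 2 * (m':ℝ)) * ε), sq_nonneg ε, hε.le]
    calc 2 * ε = Real.sqrt ((2 * ε) ^ 2) := (Real.sqrt_sq (by positivity)).symm
      _ ≤ _ := Real.sqrt_le_sqrt h4
  have hdaε : dist a (a + ε • d) = ε := by
    rw [dist_eq_norm, show a - (a + ε • d) = (-ε) • d by module, norm_smul, hd]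
    simp [abs_of_pos hε]
  refine ⟨?_, hdaε, ?_, ?_⟩
  · rintro x (rfl | rfl)
    · exact Or.inr (Or.inl rfl)
    · exact Or.inr (Or.inr (Or.inl rfl))
  · -- uniqueness of the ε-pair
    intro x hx y hy hxy hdist
    rcases hP x hx with rfl | ⟨m, n, rfl⟩ <;> rcases hP y hy with h | ⟨m', n', h⟩
    · exact absurd h.symm hxy
    · obtain ⟨m', n', rfl⟩ := h
      obtain ⟨rfl, rfl⟩ := haux2 m' n' hdist
      rw [hg00]
    · subst h
      obtain ⟨rfl, rfl⟩ := haux2 m n (by rwa [dist_comm] at hdist)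
      rw [hg00, Set.pair_comm]
    · subst h
      have := haux3 m n m' n' hxy
      rw [hdist] at this
      linarith
  · -- all other pairs at distance ≥ 2ε
    intro x hx y hy hxy hne
    rcases hP x hx with rfl | ⟨m, n, rfl⟩ <;> rcases hP y hy with h | ⟨m', n', h⟩
    · exact absurd h.symm hxy
    · obtain ⟨m', n', rfl⟩ := h
      refine haux1 m' n' ?_
      rintro ⟨rfl, rfl⟩
      exact hne (by rw [hg00])
    · subst h
      rw [dist_comm]
      refine haux1 m n ?_
      rintro ⟨rfl, rfl⟩
      exact hne (by rw [hg00, Set.pair_comm])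
    · subst h
      exact haux3 m n m' n' hxy
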